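/- Let 𝒳* = {qπ/K : q ∈ ℤ} \ {nπ : n ∈ ℤ} and let D_X = {Δx_{l,i}, Δz_{m,j}, Δx_{l,i} ± Δz_{m,j} : 0≤l<i≤L_r-1, 0≤m<j≤L_s-1} (with obvious degenerate forms when L_r=1 or L_s=1). If D_X ⊂ 𝒳*, then the function J_a(x,z,y,v) = Σ_w c_w f(Δx_w, Δy_w) + Σ_p d_p f(Δz_p, Δv_p) + Σ_{w,p} (c'_w d'_p/2)[f(Δx_w+Δz_p, Δy_w+Δv_p) + f(Δx_w-Δz_p, Δy_w-Δv_p)] is identically zero in (y,v) ∈ [0,2π)^{L_r}×[0,2π)^{L_s}. -/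

import Mathlib

open MeasureTheory Real Finset

/-- f(x,y) = Σ_{k=0}^{K-1} cos(y - 2kx). -/
noncomputable def fK (K : ℕ) (x y : ℝ) : ℝ :=
  ∑ k ∈ Finset.range K, Real.cos (y - 2 * (k : ℝ) * x)

/-- the hypercube [0, 2π)^L. -/
def cube (L : ℕ) : Set (Fin L → ℝ) := Set.univ.pi fun _ => Set.Ico 0 (2 * Real.pi)

/-- 𝒳* = {qπ/K : q ∈ ℤ} \ {nπ : n ∈ ℤ}. -/
def Xstar (K : ℕ) : Set ℝ :=
  {r | (∃ q : ℤ, r = (q : ℝ) * Real.pi / K) ∧ ∀ n : ℤ, r ≠ (n : ℝ) * Real.pi}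

/-- the representative of a modulo π lying in [0, π). -/
noncomputable def modpi (a : ℝ) : ℝ := a - Real.pi * ⌊a / Real.pi⌋

/-- the set of ordered index pairs (first strictly less than second). -/
def pairs (L : ℕ) : Finset (Fin L × Fin L) := Finset.univ.filter fun p => p.1 < p.2

/-- the function J_a from eq. (25)/(eq:J:wp:compact). -/
noncomputable def Ja (K Lr Ls : ℕ) (c c' : Fin Lr × Fin Lr → ℝ) (d d' : Fin Ls × Fin Ls → ℝ)
    (x : Fin Lr → ℝ) (z : Fin Ls → ℝ) (y : Fin Lr → ℝ) (v : Fin Ls → ℝ) : ℝ :=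
  (∑ w ∈ pairs Lr, c w * fK K (x w.2 - x w.1) (y w.2 - y w.1)) +
  (∑ p ∈ pairs Ls, d p * fK K (z p.2 - z p.1) (v p.2 - v p.1)) +
  ∑ w ∈ pairs Lr, ∑ p ∈ pairs Ls, (c' w * d' p / 2) *
    (fK K ((x w.2 - x w.1) + (z p.2 - z p.1)) ((y w.2 - y w.1) + (v p.2 - v p.1)) +
     fK K ((x w.2 - x w.1) - (z p.2 - z p.1)) ((y w.2 - y w.1) - (v p.2 - v p.1)))

/-- D_X ⊂ 𝒳*: all phase-slope differences Δx_w, Δz_p, Δx_w ± Δz_p lie in 𝒳*. -/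
def DXsub (K Lr Ls : ℕ) (x : Fin Lr → ℝ) (z : Fin Ls → ℝ) : Prop :=
  (∀ w ∈ pairs Lr, x w.2 - x w.1 ∈ Xstar K) ∧
  (∀ p ∈ pairs Ls, z p.2 - z p.1 ∈ Xstar K) ∧
  (∀ w ∈ pairs Lr, ∀ p ∈ pairs Ls,
    (x w.2 - x w.1) + (z p.2 - z p.1) ∈ Xstar K ∧
    (x w.2 - x w.1) - (z p.2 - z p.1) ∈ Xstar K)

lemma fK_zero {K : ℕ} (hK : 1 ≤ K) {x : ℝ} (hx : x ∈ Xstar K) (y : ℝ) : fK K x y = 0 := by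
  obtain ⟨⟨q, hq⟩, hn⟩ := hx
  set r : ℂ := Complex.exp ((-(2*x) : ℝ) * Complex.I) with hr
  have hK0 : (K : ℝ) ≠ 0 := Nat.cast_ne_zero.mpr (by omega)
  have castI : ∀ a b : ℝ, (a:ℂ) * Complex.I = (b:ℂ) * Complex.I → a = b := by
    intro a b h
    exact_mod_cast mul_right_cancel₀ Complex.I_ne_zero h
  have hr1 : r ≠ 1 := by
    rw [hr, Ne, Complex.exp_eq_one_iff]
    rintro ⟨n, hn'⟩
    have h2 : ((n : ℝ) * (2 * Real.pi) : ℝ) * Complex.I = (n:ℂ) * (2 * (Real.pi:ℂ) * Complex.I) := by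
      push_cast; ring
    have h3 : -(2*x) = (n : ℝ) * (2 * Real.pi) := castI _ _ (by rw [hn', h2])
    apply hn (-n)
    push_cast
    linarith
  have hrK : r ^ K = 1 := by
    rw [hr, ← Complex.exp_nat_mul, Complex.exp_eq_one_iff]
    refine ⟨-q, ?_⟩
    have h1 : (K : ℝ) * (-(2*x)) = ((-q : ℤ) : ℝ) * (2*Real.pi) := by
      rw [hq]; field_simp; push_cast; ring
    calc (K:ℂ) * (((-(2*x):ℝ):ℂ) * Complex.I)
        = (((K:ℝ) * (-(2*x)) : ℝ) : ℂ) * Complex.I := by push_cast; ring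
      _ = ((((-q:ℤ):ℝ) * (2*Real.pi) : ℝ) : ℂ) * Complex.I := by rw [h1]
      _ = ((-q:ℤ):ℂ) * (2*(Real.pi:ℂ)*Complex.I) := by push_cast; ring
  have hsum : ∑ k ∈ Finset.range K, r ^ k = 0 := by
    rw [geom_sum_eq hr1, hrK]; simp
  have key : ∀ k : ℕ, Real.cos (y - 2 * (k:ℝ) * x) =
      (Complex.exp ((y:ℝ) * Complex.I) * r ^ k).re := by
    intro k
    rw [hr, ← Complex.exp_nat_mul, ← Complex.exp_add,
      show ((y:ℝ):ℂ) * Complex.I + (k:ℂ) * (((-(2*x):ℝ):ℂ) * Complex.I)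
        = ((y - 2 * (k:ℝ) * x : ℝ) : ℂ) * Complex.I by push_cast; ring,
      Complex.exp_ofReal_mul_I_re]
  rw [fK]
  simp_rw [key]
  rw [← Complex.re_sum, ← Finset.mul_sum, hsum, mul_zero, Complex.zero_re]

theorem stmt9 (K Lr Ls : ℕ) (hK : 1 ≤ K) (hLr : 1 ≤ Lr) (hLs : 1 ≤ Ls)
    (c c' : Fin Lr × Fin Lr → ℝ) (d d' : Fin Ls × Fin Ls → ℝ)
    (hc : ∀ w, 0 ≤ c w) (hc' : ∀ w, 0 ≤ c' w) (hd : ∀ p, 0 ≤ d p) (hd' : ∀ p, 0 ≤ d' p)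
    (x : Fin Lr → ℝ) (z : Fin Ls → ℝ) (hDX : DXsub K Lr Ls x z) :
    ∀ y ∈ cube Lr, ∀ v ∈ cube Ls, Ja K Lr Ls c c' d d' x z y v = 0 := by
  obtain ⟨h1, h2, h3⟩ := hDX
  intro y _ v _
  rw [Ja]
  rw [Finset.sum_eq_zero fun w hw => by rw [fK_zero hK (h1 w hw), mul_zero],
      Finset.sum_eq_zero fun p hp => by rw [fK_zero hK (h2 p hp), mul_zero],
      Finset.sum_eq_zero fun w hw => Finset.sum_eq_zero fun p hp => by
        rw [fK_zero hK (h3 w hw p hp).1, fK_zero hK (h3 w hw p hp).2, add_zero, mul_zero]]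
  ring
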